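/- There is an absolute constant C such that for every even integer n and every real t with |t| ≥ 1, |Γ(1/2+it)/Γ(1/2+it+|n|/2)|^{sgn(n)} · |Γ(2it)/Γ(1/2+it−n/2)| ≤ C/√(cosh(πt)), where Γ is the complex Gamma function and sgn(n) ∈ {−1,0,1} is the sign of n (so for n = 0 the first factor equals 1). -/

import Mathlib

open Real

private lemma sinAbsAux (t : ℝ) (m : ℤ) :
    ‖Complex.sin ((π : ℂ) * ((1 : ℂ) / 2 + Complex.I * (t : ℂ) - (m : ℂ)))‖ =
      Real.cosh (π * t) := by
  have h : (π : ℂ) * ((1 : ℂ) / 2 + Complex.I * (t : ℂ) - (m : ℂ)) =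
      (((π * t : ℝ) : ℂ) * Complex.I + (π : ℂ) / 2) - ((m * π : ℝ) : ℂ) := by
    push_cast; ring
  rw [h, Complex.sin_sub]
  rw [show ((m * π : ℝ) : ℂ) = (m : ℂ) * (π : ℂ) by push_cast; ring]
  rw [Complex.sin_int_mul_pi, mul_zero, sub_zero, Complex.sin_add_pi_div_two,
    Complex.cos_mul_I, norm_mul]
  rw [show ((m : ℂ) * (π : ℂ)) = ((m * π : ℝ) : ℂ) by push_cast; ring]
  rw [← Complex.ofReal_cos, Complex.norm_real, Real.norm_eq_abs, Real.abs_cos_int_mul_pi,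
    ← Complex.ofReal_cosh, Complex.norm_real, Real.norm_eq_abs, abs_of_pos (Real.cosh_pos _), mul_one]

private lemma pairAux (t : ℝ) (m : ℤ) :
    ‖Complex.Gamma ((1 : ℂ) / 2 + Complex.I * (t : ℂ) + (m : ℂ))‖ *
      ‖Complex.Gamma ((1 : ℂ) / 2 + Complex.I * (t : ℂ) - (m : ℂ))‖ =
      π / Real.cosh (π * t) := by
  have key := Complex.Gamma_mul_Gamma_one_sub ((1 : ℂ) / 2 + Complex.I * (t : ℂ) - (m : ℂ))
  have h1 : (1 : ℂ) - ((1 : ℂ) / 2 + Complex.I * (t : ℂ) - (m : ℂ)) =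
      starRingEnd ℂ ((1 : ℂ) / 2 + Complex.I * (t : ℂ) + (m : ℂ)) := by
    simp only [map_add, map_div₀, map_one, map_ofNat, map_mul, Complex.conj_I,
      Complex.conj_ofReal, map_intCast]
    ring
  rw [h1, Complex.Gamma_conj] at key
  have h2 := congrArg (‖·‖) key
  rw [norm_mul, Complex.norm_conj, norm_div, Complex.norm_real, Real.norm_eq_abs, abs_of_pos Real.pi_pos,
    sinAbsAux t m] at h2
  rw [mul_comm]
  exact h2

private lemma gammaTwoSq (t : ℝ) (ht : t ≠ 0) :
    (‖Complex.Gamma (2 * Complex.I * (t : ℂ))‖) ^ 2 *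
      (2 * |t| * |Real.sinh (2 * π * t)|) = π := by
  have h0 : -(2 * Complex.I * (t : ℂ)) ≠ 0 := by
    simp [Complex.ext_iff, ht]
  have key := Complex.Gamma_mul_Gamma_one_sub (2 * Complex.I * (t : ℂ))
  have h1 : (1 : ℂ) - 2 * Complex.I * (t : ℂ) = -(2 * Complex.I * (t : ℂ)) + 1 := by ring
  rw [h1, Complex.Gamma_add_one _ h0] at key
  have h2 : -(2 * Complex.I * (t : ℂ)) = starRingEnd ℂ (2 * Complex.I * (t : ℂ)) := by
    simp [Complex.ext_iff]
  rw [h2, Complex.Gamma_conj] at key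
  have hsin : Complex.sin ((π : ℂ) * (2 * Complex.I * (t : ℂ))) =
      ((Real.sinh (2 * π * t) : ℝ) : ℂ) * Complex.I := by
    rw [show (π : ℂ) * (2 * Complex.I * (t : ℂ)) = ((2 * π * t : ℝ) : ℂ) * Complex.I by
      push_cast; ring, Complex.sin_mul_I, Complex.ofReal_sinh]
  have h3 := congrArg (‖·‖) key
  rw [hsin] at h3
  simp only [norm_mul, norm_div, Complex.norm_conj, Complex.norm_real, Real.norm_eq_abs, Complex.norm_I,
    Complex.norm_two, mul_one] at h3
  rw [abs_of_pos Real.pi_pos] at h3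
  have hSne : |Real.sinh (2 * π * t)| ≠ 0 := by
    simp only [ne_eq, abs_eq_zero]
    intro h
    exact ht (by
      have := Real.sinh_injective (h.trans Real.sinh_zero.symm)
      have hπ := Real.pi_pos
      nlinarith)
  field_simp at h3 ⊢
  nlinarith [h3]

private lemma keyIneq (t : ℝ) (ht : 1 ≤ |t|) :
    Real.cosh (π * t) ^ 2 ≤ 2 * |t| * |Real.sinh (2 * π * t)| := by
  have hπ := Real.pi_gt_three
  have hx : (1 : ℝ) ≤ π * |t| := by nlinarith
  have hcosh : Real.cosh (π * t) = Real.cosh (π * |t|) := by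
    rw [show π * |t| = |π * t| by rw [abs_mul, abs_of_pos Real.pi_pos], Real.cosh_abs]
  have hsinh : |Real.sinh (2 * π * t)| = Real.sinh (2 * (π * |t|)) := by
    rw [Real.abs_sinh, show |2 * π * t| = 2 * (π * |t|) by
      rw [abs_mul, abs_mul, abs_of_pos Real.pi_pos, abs_two]; ring]
  rw [hcosh, hsinh]
  set x := π * |t| with hxdef
  have e1 : (2 : ℝ) ≤ Real.exp x := by
    have h1 := Real.add_one_le_exp (1 : ℝ)
    have h2 := Real.exp_le_exp.mpr hx
    linarith
  have e2 : Real.exp (-x) ≤ 1 := by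
    rw [show (1 : ℝ) = Real.exp 0 from Real.exp_zero.symm]
    exact Real.exp_le_exp.mpr (by linarith)
  have h4 : Real.cosh x ≤ 4 * Real.sinh x := by
    rw [Real.cosh_eq, Real.sinh_eq]
    have := Real.exp_pos (-x)
    linarith
  have hc := Real.cosh_pos x
  have hs2 := Real.sinh_two_mul x
  nlinarith [mul_le_mul_of_nonneg_right h4 hc.le, mul_nonneg (by linarith : (0:ℝ) ≤ Real.sinh x) hc.le]

theorem stmt12 :
    ∃ C : ℝ, ∀ n : ℤ, Even n → ∀ t : ℝ, 1 ≤ |t| →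
      (‖Complex.Gamma ((1 : ℂ) / 2 + Complex.I * (t : ℂ)) /
          Complex.Gamma ((1 : ℂ) / 2 + Complex.I * (t : ℂ) + ((|n| : ℤ) : ℂ) / 2)‖) ^ (Int.sign n) *
        ‖Complex.Gamma (2 * Complex.I * (t : ℂ)) /
          Complex.Gamma ((1 : ℂ) / 2 + Complex.I * (t : ℂ) - (n : ℂ) / 2)‖ ≤
      C / Real.sqrt (Real.cosh (π * t)) := by
  refine ⟨1, ?_⟩
  intro n hn t ht
  have ht0 : t ≠ 0 := by
    intro h; rw [h, abs_zero] at ht; linarith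
  have hc := Real.cosh_pos (π * t)
  have hGne : ∀ m : ℤ, Complex.Gamma ((1 : ℂ) / 2 + Complex.I * (t : ℂ) - (m : ℂ)) ≠ 0 := by
    intro m
    apply Complex.Gamma_ne_zero
    intro k h
    apply ht0
    have := congrArg Complex.im h
    simpa using this
  have hGne' : ∀ m : ℤ, Complex.Gamma ((1 : ℂ) / 2 + Complex.I * (t : ℂ) + (m : ℂ)) ≠ 0 := by
    intro m
    have := hGne (-m)
    rw [Int.cast_neg, sub_neg_eq_add] at this
    exact this
  obtain ⟨m, rfl⟩ := hn
  set G := ‖Complex.Gamma (2 * Complex.I * (t : ℂ))‖ with hGdef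
  set A := ‖Complex.Gamma ((1 : ℂ) / 2 + Complex.I * (t : ℂ))‖ with hAdef
  have hApos : 0 < A := by
    rw [hAdef]
    exact norm_pos_iff.mpr (by simpa using hGne' 0)
  have hAsq : A ^ 2 = π / Real.cosh (π * t) := by
    have := pairAux t 0
    simp only [Int.cast_zero, add_zero, sub_zero] at this
    rw [hAdef, sq]
    exact this
  have hGsq := gammaTwoSq t ht0
  have hkey := keyIneq t ht
  have final : ∀ X : ℝ, 0 ≤ X → X ^ 2 = G ^ 2 * Real.cosh (π * t) / π →
      X ≤ 1 / Real.sqrt (Real.cosh (π * t)) := by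
    intro X hX hX2
    have h2 : X ^ 2 ≤ (1 / Real.sqrt (Real.cosh (π * t))) ^ 2 := by
      rw [hX2, div_pow, one_pow, Real.sq_sqrt hc.le, div_le_div_iff₀ Real.pi_pos hc]
      nlinarith [mul_le_mul_of_nonneg_left hkey (sq_nonneg G)]
    calc X = Real.sqrt (X ^ 2) := (Real.sqrt_sq hX).symm
      _ ≤ Real.sqrt ((1 / Real.sqrt (Real.cosh (π * t))) ^ 2) := Real.sqrt_le_sqrt h2
      _ = 1 / Real.sqrt (Real.cosh (π * t)) := Real.sqrt_sq (by positivity)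
  have hmain : G / A ≤ 1 / Real.sqrt (Real.cosh (π * t)) := by
    apply final _ (by positivity)
    rw [div_pow, hAsq, div_div_eq_mul_div]
  rcases lt_trichotomy m 0 with hm | hm | hm
  · -- n = m + m < 0
    have hsgn : Int.sign (m + m) = -1 := Int.sign_eq_neg_one_iff_neg.mpr (by omega)
    have e1 : (1 : ℂ) / 2 + Complex.I * (t : ℂ) + ((|m + m| : ℤ) : ℂ) / 2 =
        (1 : ℂ) / 2 + Complex.I * (t : ℂ) - (m : ℂ) := by
      rw [show (|m + m| : ℤ) = -(m + m) from abs_of_neg (by omega)]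
      push_cast; ring
    have e2 : (1 : ℂ) / 2 + Complex.I * (t : ℂ) - ((m + m : ℤ) : ℂ) / 2 =
        (1 : ℂ) / 2 + Complex.I * (t : ℂ) - (m : ℂ) := by push_cast; ring
    rw [e1, e2, hsgn, zpow_neg_one, norm_div, norm_div, inv_div]
    set D := ‖Complex.Gamma ((1 : ℂ) / 2 + Complex.I * (t : ℂ) - (m : ℂ))‖ with hDdef
    have hDpos : 0 < D := norm_pos_iff.mpr (hGne m)
    rw [div_mul_div_comm, mul_comm A D, mul_div_mul_left _ _ hDpos.ne']
    exact hmain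
  · -- n = 0
    subst hm
    simp only [add_zero, abs_zero, Int.cast_zero, zero_div, sub_zero, Int.sign_zero,
      zpow_zero, one_mul, norm_div]
    exact hmain
  · -- n = m + m > 0
    have hsgn : Int.sign (m + m) = 1 := Int.sign_eq_one_iff_pos.mpr (by omega)
    have e1 : (1 : ℂ) / 2 + Complex.I * (t : ℂ) + ((|m + m| : ℤ) : ℂ) / 2 =
        (1 : ℂ) / 2 + Complex.I * (t : ℂ) + (m : ℂ) := by
      rw [show (|m + m| : ℤ) = m + m from abs_of_pos (by omega)]
      push_cast; ring
    have e2 : (1 : ℂ) / 2 + Complex.I * (t : ℂ) - ((m + m : ℤ) : ℂ) / 2 =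
        (1 : ℂ) / 2 + Complex.I * (t : ℂ) - (m : ℂ) := by push_cast; ring
    rw [e1, e2, hsgn, zpow_one, norm_div, norm_div]
    set B := ‖Complex.Gamma ((1 : ℂ) / 2 + Complex.I * (t : ℂ) + (m : ℂ))‖ with hBdef
    set D := ‖Complex.Gamma ((1 : ℂ) / 2 + Complex.I * (t : ℂ) - (m : ℂ))‖ with hDdef
    have hBD : B * D = π / Real.cosh (π * t) := pairAux t m
    have hABD : A ^ 2 = B * D := by rw [hAsq, hBD]
    have hprod : A / B * (G / D) = G / A := by
      rw [div_mul_div_comm, ← hABD, sq, mul_div_mul_left _ _ hApos.ne']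
    rw [hprod]
    exact hmain
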